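/- The map sending a binary string X of length L < 2^{m−1} to the polynomial Q(x; M_1, ..., M_ℓ, bin_{m−1}(L)) ∈ F_p[x] arising in the c-decBRWHash construction is injective. That is, if X and X′ are distinct binary strings of lengths L, L′ < 2^{m−1}, then the corresponding polynomials Q and Q′ are distinct. -/

import Mathlib

/-- The (big-endian) numerical value of a bit string (zero-padding does not change it). -/
def blockVal (b : List Bool) : ℕ :=
  b.foldl (fun acc bit => 2 * acc + bit.toNat) 0


open Polynomial

/-- Degree bound for BRW polynomials on `k` blocks. -/
def Dg (k : ℕ) : ℕ := if k ≤ 2 then min k 1 else 2 ^ (Nat.log 2 k + 1) - 1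

lemma Dg_lt_pow (k : ℕ) : Dg k < 2 ^ (Nat.log 2 k + 1) := by
  unfold Dg
  split
  · have : (2:ℕ) ^ 1 ≤ 2 ^ (Nat.log 2 k + 1) := Nat.pow_le_pow_right (by norm_num) (by omega)
    omega
  · have : 0 < 2 ^ (Nat.log 2 k + 1) := Nat.pow_pos (by norm_num)
    omega

lemma four_le_pow_log {len : ℕ} (h : 4 ≤ len) : 4 ≤ 2 ^ Nat.log 2 len := by
  have h2 : 2 ≤ Nat.log 2 len := by
    rw [Nat.le_log_iff_pow_le (by norm_num) (by omega)]
    omega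
  calc (4:ℕ) = 2 ^ 2 := by norm_num
  _ ≤ 2 ^ Nat.log 2 len := Nat.pow_le_pow_right (by norm_num) h2

lemma pow_log_le {len : ℕ} (h : 4 ≤ len) : 2 ^ Nat.log 2 len ≤ len :=
  Nat.pow_log_le_self 2 (by omega)

lemma len_lt_two_pow_log {len : ℕ} (h : 4 ≤ len) : len < 2 * 2 ^ Nat.log 2 len := by
  have := Nat.lt_pow_succ_log_self (b := 2) (by norm_num) len
  rwa [Nat.succ_eq_add_one, pow_succ, mul_comm] at this

lemma log_pred_pow {len : ℕ} (h : 4 ≤ len) :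
    Nat.log 2 (2 ^ Nat.log 2 len - 1) = Nat.log 2 len - 1 := by
  have h2 : 2 ≤ Nat.log 2 len := by
    rw [Nat.le_log_iff_pow_le (by norm_num) (by omega)]; omega
  apply Nat.log_eq_of_pow_le_of_lt_pow
  · have : 2 ^ (Nat.log 2 len - 1) < 2 ^ Nat.log 2 len :=
      Nat.pow_lt_pow_right (by norm_num) (by omega)
    omega
  · have : Nat.log 2 len - 1 + 1 = Nat.log 2 len := by omega
    rw [this]
    have : 0 < 2 ^ Nat.log 2 len := Nat.pow_pos (by norm_num)
    omega

lemma Dg_pred_pow {len : ℕ} (h : 4 ≤ len) :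
    Dg (2 ^ Nat.log 2 len - 1) = 2 ^ Nat.log 2 len - 1 := by
  have h4 := four_le_pow_log h
  have h2 : 2 ≤ Nat.log 2 len := by
    rw [Nat.le_log_iff_pow_le (by norm_num) (by omega)]; omega
  rw [Dg, if_neg (by omega), log_pred_pow h]
  have : Nat.log 2 len - 1 + 1 = Nat.log 2 len := by omega
  rw [this]

lemma Dg_drop_le {len : ℕ} (h : 4 ≤ len) :
    Dg (len - 2 ^ Nat.log 2 len) ≤ 2 ^ Nat.log 2 len - 1 := by
  have h4 := four_le_pow_log h
  have hle := pow_log_le h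
  have hlt := len_lt_two_pow_log h
  by_cases hk2 : len - 2 ^ Nat.log 2 len ≤ 2
  · rw [Dg, if_pos hk2]
    omega
  · rw [Dg, if_neg hk2]
    have hk1 : len - 2 ^ Nat.log 2 len ≤ 2 ^ Nat.log 2 len - 1 := by omega
    have hmono : Nat.log 2 (len - 2 ^ Nat.log 2 len) ≤ Nat.log 2 (2 ^ Nat.log 2 len - 1) :=
      Nat.log_mono_right hk1
    rw [log_pred_pow h] at hmono
    have h2 : 2 ≤ Nat.log 2 len := by
      rw [Nat.le_log_iff_pow_le (by norm_num) (by omega)]; omega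
    have h5 : 2 ^ (Nat.log 2 (len - 2 ^ Nat.log 2 len) + 1) ≤ 2 ^ Nat.log 2 len :=
      Nat.pow_le_pow_right (by norm_num) (by omega)
    omega

lemma Dg_eq_of_four_le {len : ℕ} (h : 4 ≤ len) :
    Dg len = 2 * 2 ^ Nat.log 2 len - 1 := by
  rw [Dg, if_neg (by omega), pow_succ, mul_comm]

/- blockVal lemmas -/
lemma foldl_blockVal (b : List Bool) (a : ℕ) :
    b.foldl (fun acc bit => 2 * acc + bit.toNat) a = a * 2 ^ b.length + blockVal b := by
  induction b generalizing a with
  | nil => simp [blockVal]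
  | cons x t ih =>
    show t.foldl _ (2 * a + x.toNat) = _
    rw [ih]
    show _ = a * 2 ^ (t.length + 1) + List.foldl _ 0 (x :: t)
    show _ = a * 2 ^ (t.length + 1) + t.foldl _ (2 * 0 + x.toNat)
    rw [ih (2 * 0 + x.toNat)]
    ring

lemma blockVal_cons (x : Bool) (t : List Bool) :
    blockVal (x :: t) = x.toNat * 2 ^ t.length + blockVal t := by
  show t.foldl _ (2 * 0 + x.toNat) = _
  rw [foldl_blockVal]; ring_nf

lemma blockVal_lt (b : List Bool) : blockVal b < 2 ^ b.length := by
  induction b with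
  | nil => simp [blockVal]
  | cons x t ih =>
    rw [blockVal_cons]
    have : x.toNat ≤ 1 := by cases x <;> simp
    have h2 : x.toNat * 2 ^ t.length ≤ 2 ^ t.length := by
      calc x.toNat * 2 ^ t.length ≤ 1 * 2 ^ t.length := Nat.mul_le_mul_right _ this
      _ = 2 ^ t.length := one_mul _
    simp only [List.length_cons, pow_succ]
    omega

lemma blockVal_inj : ∀ (b b' : List Bool), b.length = b'.length →
    blockVal b = blockVal b' → b = b' := by
  intro b
  induction b with
  | nil => intro b' h _; simp at h; exact (List.length_eq_zero_iff.mp h.symm).symm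
  | cons x t ih =>
    intro b' h hv
    cases b' with
    | nil => simp at h
    | cons y s =>
      simp only [List.length_cons, Nat.add_right_cancel_iff] at h
      rw [blockVal_cons, blockVal_cons, h] at hv
      have h1 := blockVal_lt t
      have h2 := blockVal_lt s
      rw [h] at h1
      have hx : x = y := by cases x <;> cases y <;> simp_all <;> omega
      subst hx
      have : blockVal t = blockVal s := by omega
      rw [ih s h this]

section BRWlemmas

variable {R : Type*} [CommRing R] [IsDomain R]

lemma brw_deg (BRW : List R → Polynomial R)
    (hB0 : BRW [] = 0)
    (hB1 : ∀ a : R, BRW [a] = C a)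
    (hB2 : ∀ a b : R, BRW [a, b] = C a * X + C b)
    (hB3 : ∀ a b c' : R, BRW [a, b, c'] = (X + C a) * (X ^ 2 + C b) + C c')
    (hBrec : ∀ l : List R, 4 ≤ l.length →
      BRW l = BRW (l.take (2 ^ Nat.log 2 l.length - 1)) *
        (X ^ (2 ^ Nat.log 2 l.length) + C (l.getD (2 ^ Nat.log 2 l.length - 1) 0)) +
        BRW (l.drop (2 ^ Nat.log 2 l.length))) :
    ∀ l : List R, (BRW l).natDegree ≤ Dg l.length ∧
      (3 ≤ l.length → (BRW l).Monic ∧ (BRW l).natDegree = Dg l.length) := by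
  have key : ∀ N : ℕ, ∀ l : List R, l.length = N →
      (BRW l).natDegree ≤ Dg l.length ∧
      (3 ≤ l.length → (BRW l).Monic ∧ (BRW l).natDegree = Dg l.length) := by
    intro N
    induction N using Nat.strong_induction_on with
    | _ N IH =>
    intro l hl
    by_cases h4 : 4 ≤ l.length
    · -- main recursive case
      subst hl
      have hple := pow_log_le h4
      have hp4 := four_le_pow_log h4
      have hlt2 := len_lt_two_pow_log h4
      have hrec := hBrec l h4
      have htl : (l.take (2 ^ Nat.log 2 l.length - 1)).length =
          2 ^ Nat.log 2 l.length - 1 := by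
        rw [List.length_take]; exact min_eq_left (by omega)
      have hdl : (l.drop (2 ^ Nat.log 2 l.length)).length =
          l.length - 2 ^ Nat.log 2 l.length := List.length_drop
      have hIHA := IH (2 ^ Nat.log 2 l.length - 1) (by omega) _ htl
      have hIHB := IH (l.length - 2 ^ Nat.log 2 l.length) (by omega) _ hdl
      obtain ⟨hAmon, hAdeg⟩ := hIHA.2 (by rw [htl]; omega)
      rw [htl, Dg_pred_pow h4] at hAdeg
      have hXqmon : (X ^ (2 ^ Nat.log 2 l.length) +
          C (l.getD (2 ^ Nat.log 2 l.length - 1) 0)).Monic :=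
        monic_X_pow_add (lt_of_le_of_lt degree_C_le (by exact_mod_cast Nat.lt_of_lt_of_le (by norm_num) hp4))
      have hProdMon := hAmon.mul hXqmon
      have hProdDeg : (BRW (l.take (2 ^ Nat.log 2 l.length - 1)) *
          (X ^ (2 ^ Nat.log 2 l.length) + C (l.getD (2 ^ Nat.log 2 l.length - 1) 0))).natDegree =
          2 * 2 ^ Nat.log 2 l.length - 1 := by
        rw [Polynomial.Monic.natDegree_mul hAmon hXqmon, hAdeg, natDegree_X_pow_add_C]
        omega
      have hBdeg : (BRW (l.drop (2 ^ Nat.log 2 l.length))).natDegree ≤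
          2 ^ Nat.log 2 l.length - 1 := by
        have := hIHB.1
        rw [hdl] at this
        exact le_trans this (Dg_drop_le h4)
      have hdeglt : (BRW (l.drop (2 ^ Nat.log 2 l.length))).degree <
          (BRW (l.take (2 ^ Nat.log 2 l.length - 1)) *
          (X ^ (2 ^ Nat.log 2 l.length) + C (l.getD (2 ^ Nat.log 2 l.length - 1) 0))).degree := by
        calc (BRW (l.drop (2 ^ Nat.log 2 l.length))).degree
            ≤ ((BRW (l.drop (2 ^ Nat.log 2 l.length))).natDegree : WithBot ℕ) :=
              degree_le_natDegree
        _ < ((BRW (l.take (2 ^ Nat.log 2 l.length - 1)) *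
              (X ^ (2 ^ Nat.log 2 l.length) +
                C (l.getD (2 ^ Nat.log 2 l.length - 1) 0))).natDegree : WithBot ℕ) := by
              rw [hProdDeg]
              exact_mod_cast Nat.lt_of_le_of_lt hBdeg (by omega)
        _ = _ := (degree_eq_natDegree hProdMon.ne_zero).symm
      have hmon : (BRW l).Monic := by
        rw [hrec]; exact hProdMon.add_of_left hdeglt
      have hdeg : (BRW l).natDegree = Dg l.length := by
        rw [hrec, natDegree_eq_of_degree_eq (degree_add_eq_left_of_degree_lt hdeglt),
          hProdDeg, Dg_eq_of_four_le h4]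
      exact ⟨le_of_eq hdeg, fun _ => ⟨hmon, hdeg⟩⟩
    · -- small cases
      rcases l with _ | ⟨a, _ | ⟨b, _ | ⟨c', _ | ⟨d', t⟩⟩⟩⟩
      · simp [hB0, Dg]
      · simp [hB1, Dg]
      · constructor
        · rw [hB2]
          have hDg : Dg ([a, b].length) = 1 := by norm_num [Dg]
          rw [hDg]
          compute_degree
        · intro h3; simp at h3
      · have hexp : BRW [a, b, c'] = X ^ 3 + (C a * X ^ 2 + C b * X + C (a * b + c')) := by
          rw [hB3, C_add, C_mul]; ring
        have hmon : (BRW [a, b, c']).Monic := by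
          rw [hexp]
          have hd : (C a * X ^ 2 + C b * X + C (a * b + c')).degree ≤ 2 := by compute_degree
          exact monic_X_pow_add (lt_of_le_of_lt hd (by exact_mod_cast (by norm_num : (2:ℕ) < 3)))
        have hlog3 : Nat.log 2 3 = 1 := Nat.log_eq_of_pow_le_of_lt_pow (by norm_num) (by norm_num)
        have hDg : Dg ([a, b, c'].length) = 3 := by
          show Dg 3 = 3
          rw [Dg, if_neg (by norm_num), hlog3]
          norm_num
        have hdeg : (BRW [a, b, c']).natDegree = 3 := by
          rw [hexp]
          compute_degree!
        exact ⟨by omega, fun _ => ⟨hmon, by omega⟩⟩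
      · exfalso; apply h4; simp
  intro l; exact key l.length l rfl

end BRWlemmas

section BRWinj

variable {R : Type*} [CommRing R] [IsDomain R]

lemma brw_inj (BRW : List R → Polynomial R)
    (hB0 : BRW [] = 0)
    (hB1 : ∀ a : R, BRW [a] = C a)
    (hB2 : ∀ a b : R, BRW [a, b] = C a * X + C b)
    (hB3 : ∀ a b c' : R, BRW [a, b, c'] = (X + C a) * (X ^ 2 + C b) + C c')
    (hBrec : ∀ l : List R, 4 ≤ l.length →
      BRW l = BRW (l.take (2 ^ Nat.log 2 l.length - 1)) *
        (X ^ (2 ^ Nat.log 2 l.length) + C (l.getD (2 ^ Nat.log 2 l.length - 1) 0)) +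
        BRW (l.drop (2 ^ Nat.log 2 l.length))) :
    ∀ l l' : List R, l.length = l'.length → BRW l = BRW l' → l = l' := by
  have hdeg := brw_deg BRW hB0 hB1 hB2 hB3 hBrec
  have key : ∀ N : ℕ, ∀ l l' : List R, l.length = N → l'.length = N →
      BRW l = BRW l' → l = l' := by
    intro N
    induction N using Nat.strong_induction_on with
    | _ N IH =>
    intro l l' hl hl' heq
    by_cases h4 : 4 ≤ N
    · -- main case
      have h4l : 4 ≤ l.length := by omega
      have h4l' : 4 ≤ l'.length := by omega
      have hll' : l'.length = l.length := by omega
      have hlog : Nat.log 2 l'.length = Nat.log 2 l.length := by rw [hll']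
      have hple := pow_log_le h4l
      have hp4 := four_le_pow_log h4l
      have hlt2 := len_lt_two_pow_log h4l
      have hrec1 := hBrec l h4l
      have hrec2 := hBrec l' h4l'
      rw [hlog] at hrec2
      have htl : (l.take (2 ^ Nat.log 2 l.length - 1)).length =
          2 ^ Nat.log 2 l.length - 1 := by
        rw [List.length_take]; exact min_eq_left (by omega)
      have htl' : (l'.take (2 ^ Nat.log 2 l.length - 1)).length =
          2 ^ Nat.log 2 l.length - 1 := by
        rw [List.length_take]; exact min_eq_left (by omega)
      have hdl : (l.drop (2 ^ Nat.log 2 l.length)).length =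
          l.length - 2 ^ Nat.log 2 l.length := List.length_drop
      have hdl' : (l'.drop (2 ^ Nat.log 2 l.length)).length =
          l.length - 2 ^ Nat.log 2 l.length := by
        rw [List.length_drop, hll']
      obtain ⟨hAmon, hAdeg⟩ := (hdeg (l.take (2 ^ Nat.log 2 l.length - 1))).2
        (by rw [htl]; omega)
      rw [htl, Dg_pred_pow h4l] at hAdeg
      obtain ⟨hA'mon, hA'deg⟩ := (hdeg (l'.take (2 ^ Nat.log 2 l.length - 1))).2
        (by rw [htl']; omega)
      rw [htl', Dg_pred_pow h4l] at hA'deg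
      have hBd : (BRW (l.drop (2 ^ Nat.log 2 l.length))).natDegree ≤
          2 ^ Nat.log 2 l.length - 1 := by
        have := (hdeg (l.drop (2 ^ Nat.log 2 l.length))).1
        rw [hdl] at this
        exact le_trans this (Dg_drop_le h4l)
      have hBd' : (BRW (l'.drop (2 ^ Nat.log 2 l.length))).natDegree ≤
          2 ^ Nat.log 2 l.length - 1 := by
        have := (hdeg (l'.drop (2 ^ Nat.log 2 l.length))).1
        rw [hdl'] at this
        exact le_trans this (Dg_drop_le h4l)
      -- Step 1: the take-parts have equal BRW images
      have hAA : BRW (l.take (2 ^ Nat.log 2 l.length - 1)) =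
          BRW (l'.take (2 ^ Nat.log 2 l.length - 1)) := by
        by_contra hne
        have hE : BRW (l.take (2 ^ Nat.log 2 l.length - 1)) *
            (X ^ (2 ^ Nat.log 2 l.length) + C (l.getD (2 ^ Nat.log 2 l.length - 1) 0)) +
            BRW (l.drop (2 ^ Nat.log 2 l.length)) =
            BRW (l'.take (2 ^ Nat.log 2 l.length - 1)) *
            (X ^ (2 ^ Nat.log 2 l.length) + C (l'.getD (2 ^ Nat.log 2 l.length - 1) 0)) +
            BRW (l'.drop (2 ^ Nat.log 2 l.length)) := by
          rw [← hrec1, ← hrec2]; exact heq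
        have h5 : (BRW (l.take (2 ^ Nat.log 2 l.length - 1)) -
            BRW (l'.take (2 ^ Nat.log 2 l.length - 1))) * X ^ (2 ^ Nat.log 2 l.length) =
            (C (l'.getD (2 ^ Nat.log 2 l.length - 1) 0) *
              BRW (l'.take (2 ^ Nat.log 2 l.length - 1)) +
              BRW (l'.drop (2 ^ Nat.log 2 l.length))) -
            (C (l.getD (2 ^ Nat.log 2 l.length - 1) 0) *
              BRW (l.take (2 ^ Nat.log 2 l.length - 1)) +
              BRW (l.drop (2 ^ Nat.log 2 l.length))) := by
          linear_combination hE
        have hXne : (X : Polynomial R) ^ (2 ^ Nat.log 2 l.length) ≠ 0 :=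
          pow_ne_zero _ X_ne_zero
        have hsub : BRW (l.take (2 ^ Nat.log 2 l.length - 1)) -
            BRW (l'.take (2 ^ Nat.log 2 l.length - 1)) ≠ 0 := sub_ne_zero.mpr hne
        have hLdeg := natDegree_mul hsub hXne
        rw [natDegree_X_pow, h5] at hLdeg
        have hRdeg : ((C (l'.getD (2 ^ Nat.log 2 l.length - 1) 0) *
              BRW (l'.take (2 ^ Nat.log 2 l.length - 1)) +
              BRW (l'.drop (2 ^ Nat.log 2 l.length))) -
            (C (l.getD (2 ^ Nat.log 2 l.length - 1) 0) *
              BRW (l.take (2 ^ Nat.log 2 l.length - 1)) +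
              BRW (l.drop (2 ^ Nat.log 2 l.length)))).natDegree ≤
            2 ^ Nat.log 2 l.length - 1 := by
          apply le_trans (natDegree_sub_le _ _)
          apply max_le
          · apply le_trans (natDegree_add_le _ _)
            apply max_le
            · exact le_trans (natDegree_C_mul_le _ _) (le_of_eq hA'deg)
            · exact hBd'
          · apply le_trans (natDegree_add_le _ _)
            apply max_le
            · exact le_trans (natDegree_C_mul_le _ _) (le_of_eq hAdeg)
            · exact hBd
        omega
      rw [← hAA] at hrec2
      have hE : BRW (l.take (2 ^ Nat.log 2 l.length - 1)) *
          (X ^ (2 ^ Nat.log 2 l.length) + C (l.getD (2 ^ Nat.log 2 l.length - 1) 0)) +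
          BRW (l.drop (2 ^ Nat.log 2 l.length)) =
          BRW (l.take (2 ^ Nat.log 2 l.length - 1)) *
          (X ^ (2 ^ Nat.log 2 l.length) + C (l'.getD (2 ^ Nat.log 2 l.length - 1) 0)) +
          BRW (l'.drop (2 ^ Nat.log 2 l.length)) := by
        rw [← hrec1, ← hrec2]; exact heq
      have h6 : C (l.getD (2 ^ Nat.log 2 l.length - 1) 0 -
            l'.getD (2 ^ Nat.log 2 l.length - 1) 0) *
            BRW (l.take (2 ^ Nat.log 2 l.length - 1)) =
          BRW (l'.drop (2 ^ Nat.log 2 l.length)) -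
            BRW (l.drop (2 ^ Nat.log 2 l.length)) := by
        rw [C_sub]; linear_combination hE
      -- Step 2: middle blocks agree
      have hMM : l.getD (2 ^ Nat.log 2 l.length - 1) 0 =
          l'.getD (2 ^ Nat.log 2 l.length - 1) 0 := by
        by_contra hne
        have hCne : C (l.getD (2 ^ Nat.log 2 l.length - 1) 0 -
            l'.getD (2 ^ Nat.log 2 l.length - 1) 0) ≠ (0 : Polynomial R) :=
          C_ne_zero.mpr (sub_ne_zero.mpr hne)
        have hLne : C (l.getD (2 ^ Nat.log 2 l.length - 1) 0 -
            l'.getD (2 ^ Nat.log 2 l.length - 1) 0) *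
            BRW (l.take (2 ^ Nat.log 2 l.length - 1)) ≠ 0 :=
          mul_ne_zero hCne hAmon.ne_zero
        have hLdeg : (C (l.getD (2 ^ Nat.log 2 l.length - 1) 0 -
            l'.getD (2 ^ Nat.log 2 l.length - 1) 0) *
            BRW (l.take (2 ^ Nat.log 2 l.length - 1))).natDegree =
            2 ^ Nat.log 2 l.length - 1 := by
          rw [natDegree_mul hCne hAmon.ne_zero, natDegree_C, hAdeg, zero_add]
        by_cases hk0 : l.length - 2 ^ Nat.log 2 l.length = 0
        · have hd1 : l.drop (2 ^ Nat.log 2 l.length) = [] :=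
            List.length_eq_zero_iff.mp (by rw [hdl]; exact hk0)
          have hd2 : l'.drop (2 ^ Nat.log 2 l.length) = [] :=
            List.length_eq_zero_iff.mp (by rw [hdl']; exact hk0)
          rw [hd1, hd2, hB0, sub_zero] at h6
          exact hLne h6
        · by_cases hk3 : 3 ≤ l.length - 2 ^ Nat.log 2 l.length
          · obtain ⟨hBmon, hBdeq⟩ := (hdeg (l.drop (2 ^ Nat.log 2 l.length))).2
              (by rw [hdl]; omega)
            obtain ⟨hB'mon, hB'deq⟩ := (hdeg (l'.drop (2 ^ Nat.log 2 l.length))).2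
              (by rw [hdl']; omega)
            rw [hdl] at hBdeq
            rw [hdl'] at hB'deq
            have hBBne : BRW (l'.drop (2 ^ Nat.log 2 l.length)) -
                BRW (l.drop (2 ^ Nat.log 2 l.length)) ≠ 0 := by
              rw [← h6]; exact hLne
            have hdlt : (BRW (l'.drop (2 ^ Nat.log 2 l.length)) -
                BRW (l.drop (2 ^ Nat.log 2 l.length))).degree <
                (BRW (l'.drop (2 ^ Nat.log 2 l.length))).degree := by
              apply degree_sub_lt
              · rw [degree_eq_natDegree hB'mon.ne_zero, degree_eq_natDegree hBmon.ne_zero,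
                  hB'deq, hBdeq]
              · exact hB'mon.ne_zero
              · rw [hB'mon.leadingCoeff, hBmon.leadingCoeff]
            have hnat := natDegree_lt_natDegree hBBne hdlt
            rw [← h6, hLdeg, hB'deq] at hnat
            have := Dg_drop_le h4l
            omega
          · have hx : (BRW (l'.drop (2 ^ Nat.log 2 l.length)) -
                BRW (l.drop (2 ^ Nat.log 2 l.length))).natDegree ≤ 1 := by
              apply le_trans (natDegree_sub_le _ _)
              apply max_le
              · have := (hdeg (l'.drop (2 ^ Nat.log 2 l.length))).1
                rw [hdl'] at this
                have h2 : Dg (l.length - 2 ^ Nat.log 2 l.length) ≤ 1 := by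
                  rw [Dg, if_pos (by omega)]; omega
                omega
              · have := (hdeg (l.drop (2 ^ Nat.log 2 l.length))).1
                rw [hdl] at this
                have h2 : Dg (l.length - 2 ^ Nat.log 2 l.length) ≤ 1 := by
                  rw [Dg, if_pos (by omega)]; omega
                omega
            rw [← h6, hLdeg] at hx
            omega
      -- Step 3: drop parts agree
      have hBB : BRW (l.drop (2 ^ Nat.log 2 l.length)) =
          BRW (l'.drop (2 ^ Nat.log 2 l.length)) := by
        rw [hMM, sub_self, map_zero, zero_mul] at h6
        exact (sub_eq_zero.mp h6.symm).symm
      -- apply induction hypothesis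
      have e1 : l.take (2 ^ Nat.log 2 l.length - 1) = l'.take (2 ^ Nat.log 2 l.length - 1) :=
        IH (2 ^ Nat.log 2 l.length - 1) (by omega) _ _ htl htl' hAA
      have e2 : l.drop (2 ^ Nat.log 2 l.length) = l'.drop (2 ^ Nat.log 2 l.length) :=
        IH (l.length - 2 ^ Nat.log 2 l.length) (by omega) _ _ hdl hdl' hBB
      have recon : ∀ t : List R, t.length = l.length →
          t = t.take (2 ^ Nat.log 2 l.length - 1) ++
            t.getD (2 ^ Nat.log 2 l.length - 1) 0 :: t.drop (2 ^ Nat.log 2 l.length) := by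
        intro t ht
        have h1 : 2 ^ Nat.log 2 l.length - 1 < t.length := by omega
        rw [List.getD_eq_getElem t 0 h1]
        conv_lhs => rw [← List.take_append_drop (2 ^ Nat.log 2 l.length - 1) t]
        rw [List.drop_eq_getElem_cons h1]
        have hq1 : 2 ^ Nat.log 2 l.length - 1 + 1 = 2 ^ Nat.log 2 l.length := by omega
        rw [hq1]
      rw [recon l rfl, recon l' hll', e1, hMM, e2]
    · -- small cases
      have hN : N = 0 ∨ N = 1 ∨ N = 2 ∨ N = 3 := by omega
      rcases hN with rfl | rfl | rfl | rfl
      · rw [List.length_eq_zero_iff.mp hl, List.length_eq_zero_iff.mp hl']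
      · obtain ⟨a, rfl⟩ := List.length_eq_one_iff.mp hl
        obtain ⟨a', rfl⟩ := List.length_eq_one_iff.mp hl'
        rw [hB1, hB1] at heq
        rw [C_injective heq]
      · obtain ⟨a, b, rfl⟩ := List.length_eq_two.mp hl
        obtain ⟨a', b', rfl⟩ := List.length_eq_two.mp hl'
        rw [hB2, hB2] at heq
        have h1 : a = a' := by
          have := congrArg (fun f => f.coeff 1) heq
          simpa using this
        have h0 : b = b' := by
          have := congrArg (fun f => f.coeff 0) heq
          simpa using this
        rw [h1, h0]
      · obtain ⟨a, b, c1, rfl⟩ := List.length_eq_three.mp hl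
        obtain ⟨a', b', c1', rfl⟩ := List.length_eq_three.mp hl'
        have hexp : ∀ x y z : R, BRW [x, y, z] =
            X ^ 3 + (C x * X ^ 2 + C y * X + C (x * y + z)) := fun x y z => by
          rw [hB3, C_add, C_mul]; ring
        rw [hexp, hexp] at heq
        have heq' := add_left_cancel heq
        have h2 : a = a' := by
          have := congrArg (fun f => f.coeff 2) heq'
          simpa using this
        have h1 : b = b' := by
          have := congrArg (fun f => f.coeff 1) heq'
          simpa using this
        have h0 : a * b + c1 = a' * b' + c1' := by
          have := congrArg (fun f => f.coeff 0) heq'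
          simpa using this
        rw [h2, h1] at h0 ⊢
        rw [add_left_cancel h0]
  intro l l' h heq
  exact key l.length l l' rfl h.symm heq

end BRWinj

lemma coeff_shift_sum {R : Type*} [CommSemiring R] (c d : ℕ) (f : ℕ → Polynomial R)
    (hf : ∀ j, j < c → (f j).natDegree < d)
    (j₀ : ℕ) (hj₀ : j₀ < c) (t : ℕ) (ht : t < d) :
    (∑ j ∈ Finset.range c, X ^ ((c - 1 - j) * d) * f j).coeff ((c - 1 - j₀) * d + t) =
      (f j₀).coeff t := by
  rw [finset_sum_coeff, Finset.sum_eq_single_of_mem j₀ (Finset.mem_range.mpr hj₀)]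
  · rw [mul_comm (X ^ ((c - 1 - j₀) * d)) (f j₀), coeff_mul_X_pow',
      if_pos (Nat.le_add_right _ _), Nat.add_sub_cancel_left]
  · intro j hj hne
    rw [Finset.mem_range] at hj
    rw [mul_comm (X ^ ((c - 1 - j) * d)) (f j), coeff_mul_X_pow']
    by_cases hcase : j < j₀
    · rw [if_neg]
      have h1 : c - 1 - j₀ + 1 ≤ c - 1 - j := by omega
      have h2 := Nat.mul_le_mul_right d h1
      rw [add_mul, one_mul] at h2
      omega
    · have h1 : c - 1 - j + 1 ≤ c - 1 - j₀ := by omega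
      have h2 := Nat.mul_le_mul_right d h1
      rw [add_mul, one_mul] at h2
      rw [if_pos (by omega)]
      exact coeff_eq_zero_of_natDegree_lt (lt_of_lt_of_le (hf j hj) (by omega))

/-- The polynomial `Q(x; M_1,…,M_ℓ, bin_{m−1}(L))` of the `c-decBRWHash` construction:
with `ℓ = ⌈L/n⌉`, `𝔫 = ⌈ℓ/c⌉`, `𝔪 = c𝔫`, zero blocks `M_{ℓ+1} = ⋯ = M_𝔪 = 0`,
`Q_j(x) = BRW(x; M_j, M_{c+j}, …, M_{𝔪−c+j})`, `d = 1` if `L = 0` and `d = 2^(⌊lg 𝔫⌋+1)`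
otherwise, `Q_{c+1}(x) = Σ_{j=1}^c x^((c−j)d) Q_j(x)`, and finally
`Q(x) = x·(x·Q_{c+1}(x) + bin_{m−1}(L))`. -/
noncomputable def decQ (p n c : ℕ) (BRW : List (ZMod p) → Polynomial (ZMod p)) (X : List Bool) :
    Polynomial (ZMod p) :=
  let L := X.length
  let ℓ := (L + n - 1) / n
  let nn := (ℓ + c - 1) / c
  let d := if L = 0 then 1 else 2 ^ (Nat.log 2 nn + 1)
  let Qsum := ∑ j ∈ Finset.range c, Polynomial.X ^ ((c - 1 - j) * d) *
      BRW ((List.range nn).map fun i =>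
        ((blockVal ((X.drop (n * (c * i + j))).take n) : ℕ) : ZMod p))
  Polynomial.X * (Polynomial.X * Qsum + Polynomial.C (L : ZMod p))

/-- The map sending a binary string `X` of length `L < 2^(m−1)` to the polynomial
`Q(x; M_1,…,M_ℓ, bin_{m−1}(L)) ∈ F_p[x]` of the `c-decBRWHash` construction is injective. -/
theorem decQ_injective (p m n c : ℕ) [NeZero p] (hp : p.Prime)
    (hpl : 2 ^ (m - 1) < p) (hpu : p < 2 ^ m) (hn : 0 < n) (hnm : n < m) (hc : 0 < c)
    (BRW : List (ZMod p) → Polynomial (ZMod p))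
    (hB0 : BRW [] = 0)
    (hB1 : ∀ a : ZMod p, BRW [a] = Polynomial.C a)
    (hB2 : ∀ a b : ZMod p, BRW [a, b] = Polynomial.C a * Polynomial.X + Polynomial.C b)
    (hB3 : ∀ a b c' : ZMod p, BRW [a, b, c'] =
      (Polynomial.X + Polynomial.C a) * (Polynomial.X ^ 2 + Polynomial.C b) + Polynomial.C c')
    (hBrec : ∀ l : List (ZMod p), 4 ≤ l.length →
      BRW l = BRW (l.take (2 ^ Nat.log 2 l.length - 1)) *
        (Polynomial.X ^ (2 ^ Nat.log 2 l.length) +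
          Polynomial.C (l.getD (2 ^ Nat.log 2 l.length - 1) 0)) +
        BRW (l.drop (2 ^ Nat.log 2 l.length))) :
    ∀ X X' : List Bool, X.length < 2 ^ (m - 1) → X'.length < 2 ^ (m - 1) → X ≠ X' →
      decQ p n c BRW X ≠ decQ p n c BRW X' := by
  intro X X' hLX hLX' hne heq
  haveI : Fact p.Prime := ⟨hp⟩
  have key1 : ∀ (Q : Polynomial (ZMod p)) (a : ZMod p),
      (Polynomial.X * (Polynomial.X * Q + Polynomial.C a)).coeff 1 = a := by
    intro Q a
    have hE : Polynomial.X * (Polynomial.X * Q + Polynomial.C a) =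
        Q * Polynomial.X ^ 2 + Polynomial.C a * Polynomial.X := by ring
    rw [hE]
    simp [coeff_mul_X_pow']
  simp only [decQ] at heq
  have hclen : ((X.length : ℕ) : ZMod p) = ((X'.length : ℕ) : ZMod p) := by
    have h2 := congrArg (fun f => f.coeff 1) heq
    rwa [key1, key1] at h2
  have hlen : X.length = X'.length := by
    have hp1 : X.length < p := lt_trans hLX hpl
    have hp2 : X'.length < p := lt_trans hLX' hpl
    have h3 := congrArg ZMod.val hclen
    rwa [ZMod.val_cast_of_lt hp1, ZMod.val_cast_of_lt hp2] at h3
  by_cases hL0 : X.length = 0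
  · exact hne (by rw [List.length_eq_zero_iff.mp hL0, List.length_eq_zero_iff.mp (show X'.length = 0 by omega)])
  rw [← hlen, if_neg hL0] at heq
  set lblocks : ℕ := ((X.length + n - 1) / n + c - 1) / c with hnn
  set dd : ℕ := 2 ^ (Nat.log 2 lblocks + 1) with hdd
  have hXne : (Polynomial.X : Polynomial (ZMod p)) ≠ 0 := Polynomial.X_ne_zero
  have h1 := mul_left_cancel₀ hXne heq
  have h2 := add_right_cancel h1
  have hsum := mul_left_cancel₀ hXne h2
  have hdegAll := brw_deg BRW hB0 hB1 hB2 hB3 hBrec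
  have hlen_map : ∀ (Y : List Bool) (j : ℕ), ((List.range lblocks).map fun i =>
      ((blockVal ((Y.drop (n * (c * i + j))).take n) : ℕ) : ZMod p)).length = lblocks := by
    intro Y j; rw [List.length_map, List.length_range]
  have hfdeg : ∀ (Y : List Bool) (j : ℕ), (BRW ((List.range lblocks).map fun i =>
      ((blockVal ((Y.drop (n * (c * i + j))).take n) : ℕ) : ZMod p))).natDegree < dd := by
    intro Y j
    have h3 := (hdegAll ((List.range lblocks).map fun i =>
      ((blockVal ((Y.drop (n * (c * i + j))).take n) : ℕ) : ZMod p))).1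
    rw [hlen_map Y j] at h3
    exact lt_of_le_of_lt h3 (Dg_lt_pow lblocks)
  have hQj : ∀ j, j < c → BRW ((List.range lblocks).map fun i =>
      ((blockVal ((X.drop (n * (c * i + j))).take n) : ℕ) : ZMod p)) =
      BRW ((List.range lblocks).map fun i =>
      ((blockVal ((X'.drop (n * (c * i + j))).take n) : ℕ) : ZMod p)) := by
    intro j hj
    apply Polynomial.ext
    intro t
    by_cases ht : t < dd
    · have e1 := coeff_shift_sum c dd (fun j => BRW ((List.range lblocks).map fun i =>
        ((blockVal ((X.drop (n * (c * i + j))).take n) : ℕ) : ZMod p)))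
        (fun j _ => hfdeg X j) j hj t ht
      have e2 := coeff_shift_sum c dd (fun j => BRW ((List.range lblocks).map fun i =>
        ((blockVal ((X'.drop (n * (c * i + j))).take n) : ℕ) : ZMod p)))
        (fun j _ => hfdeg X' j) j hj t ht
      rw [← e1, ← e2, hsum]
    · rw [coeff_eq_zero_of_natDegree_lt (lt_of_lt_of_le (hfdeg X j) (by omega)),
          coeff_eq_zero_of_natDegree_lt (lt_of_lt_of_le (hfdeg X' j) (by omega))]
  have hchunk : ∀ k : ℕ, (X.drop (n * k)).take n = (X'.drop (n * k)).take n := by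
    intro k
    by_cases hk : k < c * lblocks
    · have hj : k % c < c := Nat.mod_lt _ hc
      have hi : k / c < lblocks := by
        rw [Nat.div_lt_iff_lt_mul hc]
        rw [mul_comm]
        exact hk
      have hlists := brw_inj BRW hB0 hB1 hB2 hB3 hBrec _ _
        (by rw [hlen_map, hlen_map]) (hQj (k % c) hj)
      have hentry : ((blockVal ((X.drop (n * (c * (k / c) + k % c))).take n) : ℕ) : ZMod p) =
          ((blockVal ((X'.drop (n * (c * (k / c) + k % c))).take n) : ℕ) : ZMod p) := by
        have h5 := congrArg (fun l => l.getD (k / c) (0 : ZMod p)) hlists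
        rw [List.getD_eq_getElem _ _ (by rw [hlen_map]; exact hi),
            List.getD_eq_getElem _ _ (by rw [hlen_map]; exact hi)] at h5
        simpa using h5
      rw [Nat.div_add_mod k c] at hentry
      have hval : blockVal ((X.drop (n * k)).take n) = blockVal ((X'.drop (n * k)).take n) := by
        have hble : ∀ Y : List Bool, blockVal ((Y.drop (n * k)).take n) < p := by
          intro Y
          have hv := blockVal_lt ((Y.drop (n * k)).take n)
          have hlt : ((Y.drop (n * k)).take n).length ≤ n := by
            rw [List.length_take]; exact min_le_left _ _
          have h2n : (2:ℕ) ^ ((Y.drop (n * k)).take n).length ≤ 2 ^ (m - 1) :=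
            Nat.pow_le_pow_right (by norm_num) (by omega)
          omega
        have h3 := congrArg ZMod.val hentry
        rwa [ZMod.val_cast_of_lt (hble X), ZMod.val_cast_of_lt (hble X')] at h3
      apply blockVal_inj _ _ _ hval
      rw [List.length_take, List.length_take, List.length_drop, List.length_drop, hlen]
    · have hc1 : X.length ≤ n * ((X.length + n - 1) / n) := by
        have ha := Nat.div_add_mod (X.length + n - 1) n
        have hb := Nat.mod_lt (X.length + n - 1) hn
        omega
      have hc2 : (X.length + n - 1) / n ≤ c * lblocks := by
        have ha := Nat.div_add_mod ((X.length + n - 1) / n + c - 1) c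
        have hb := Nat.mod_lt ((X.length + n - 1) / n + c - 1) hc
        rw [hnn]
        omega
      have hXk : X.length ≤ n * k :=
        le_trans hc1 (Nat.mul_le_mul_left n (le_trans hc2 (by omega)))
      have hXk' : X'.length ≤ n * k := by omega
      rw [List.drop_eq_nil_of_le hXk, List.drop_eq_nil_of_le hXk']
  apply hne
  apply List.ext_getElem hlen
  intro i hi1 hi2
  have hmod : n * (i / n) + i % n = i := Nat.div_add_mod i n
  have hb1 : i % n < ((X.drop (n * (i / n))).take n).length := by
    rw [List.length_take, List.length_drop]
    have hinn : i % n < n := Nat.mod_lt _ hn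
    omega
  have hb2 : i % n < ((X'.drop (n * (i / n))).take n).length := by
    rw [List.length_take, List.length_drop]
    have hinn : i % n < n := Nat.mod_lt _ hn
    omega
  calc X[i] = ((X.drop (n * (i / n))).take n)[i % n]'hb1 := by
        rw [List.getElem_take, List.getElem_drop]
        congr 1 <;> omega
  _ = ((X'.drop (n * (i / n))).take n)[i % n]'hb2 := List.getElem_of_eq (hchunk (i / n)) hb1
  _ = X'[i] := by
        rw [List.getElem_take, List.getElem_drop]
        congr 1 <;> omega
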